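/- For every positive integer n and every feasible vector (t₀, …, t_{2n}) for the cap set linear program, there exists a feasible vector (t₀', …, t_{2n}') with t_{2n}' = 0 and 3·∑_{i=0}^{2n} f_{n,i}·t_i' ≤ 3·∑_{i=0}^{2n} f_{n,i}·t_i; moreover if t_{2n} > 0 the inequality is strict. -/
import Mathlib


/-- `f_{n,i}`: the coefficient of `x^i` in `(1 + x + x²)^n`. -/
noncomputable def coeff3 (n i : ℕ) : ℕ :=
  (((1 + Polynomial.X + Polynomial.X ^ 2 : Polynomial ℕ)) ^ n).coeff i

/-- A vector `(t₀, …, t_{2n})` (given as a function on `ℕ`) is feasible for the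
cap set linear program if all its entries are nonnegative and
`t_i + t_j + t_k ≥ 1` whenever `i + j + k ≤ 2n`. -/
def LPFeasible (n : ℕ) (t : ℕ → ℝ) : Prop :=
  (∀ i, i ≤ 2 * n → 0 ≤ t i) ∧
  (∀ i j k : ℕ, i + j + k ≤ 2 * n → 1 ≤ t i + t j + t k)

/-- The objective value `3 ∑_{i=0}^{2n} f_{n,i} t_i` of the cap set linear program. -/
noncomputable def LPObj (n : ℕ) (t : ℕ → ℝ) : ℝ :=
  3 * ∑ i ∈ Finset.range (2 * n + 1), (coeff3 n i : ℝ) * t i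

lemma coeff3_zero (n : ℕ) : coeff3 n 0 = 1 := by
  simp [coeff3, Polynomial.coeff_zero_eq_eval_zero]

lemma coeff3_top (n : ℕ) : coeff3 n (2 * n) = 1 := by
  have hp : (1 + Polynomial.X + Polynomial.X ^ 2 : Polynomial ℕ).Monic := by monicity!
  have hd : (1 + Polynomial.X + Polynomial.X ^ 2 : Polynomial ℕ).natDegree = 2 := by
    compute_degree!
  have := (hp.pow n).coeff_natDegree
  rw [hp.natDegree_pow, hd] at this
  simpa [coeff3, mul_comm] using this

/-- Any feasible vector can be improved to one with `t_{2n} = 0`, strictly if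
`t_{2n} > 0`. -/
theorem lp_improve_last (n : ℕ) (hn : 0 < n) (t : ℕ → ℝ) (ht : LPFeasible n t) :
    ∃ t' : ℕ → ℝ, LPFeasible n t' ∧ t' (2 * n) = 0 ∧ LPObj n t' ≤ LPObj n t ∧
      (0 < t (2 * n) → LPObj n t' < LPObj n t) := by
  obtain ⟨hpos, hcon⟩ := ht
  set t' : ℕ → ℝ := fun i => if i = 2 * n then 0 else if i = 0 then max (t 0) (1/2) else t i
    with ht'def
  have hne : (0 : ℕ) ≠ 2 * n := by omega
  have ht'top : t' (2 * n) = 0 := by simp [ht'def]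
  have ht'0 : t' 0 = max (t 0) (1/2) := by simp [ht'def, hne]
  have hge : ∀ m, m ≠ 2 * n → t m ≤ t' m := by
    intro m hm
    by_cases h0 : m = 0
    · subst h0; rw [ht'0]; exact le_max_left _ _
    · simp [ht'def, hm, h0]
  -- feasibility
  have hfeas : LPFeasible n t' := by
    constructor
    · intro i hi
      by_cases h1 : i = 2 * n
      · simp [ht'def, h1]
      by_cases h2 : i = 0
      · subst h2
        rw [ht'0]
        have : (0:ℝ) ≤ 1/2 := by norm_num
        exact le_trans this (le_max_right _ _)
      · simpa [ht'def, h1, h2] using hpos i hi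
    · intro i j k hijk
      have key : ∀ a b : ℕ, a + b + 2 * n ≤ 2 * n → (1:ℝ) ≤ t' a + t' b + t' (2*n) := by
        intro a b hab
        have ha : a = 0 := by omega
        have hb : b = 0 := by omega
        subst ha; subst hb
        rw [ht'0, ht'top]
        have : (1/2 : ℝ) ≤ max (t 0) (1/2) := le_max_right _ _
        linarith
      by_cases hi : i = 2 * n
      · subst hi
        have := key j k (by omega)
        linarith
      by_cases hj : j = 2 * n
      · subst hj
        have := key i k (by omega)
        linarith
      by_cases hk : k = 2 * n
      · subst hk
        have := key i j (by omega)
        linarith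
      · have h1 := hge i hi
        have h2 := hge j hj
        have h3 := hge k hk
        have := hcon i j k hijk
        linarith
  -- sum difference
  have hconstr : (1:ℝ) ≤ t 0 + t 0 + t (2 * n) := by
    have := hcon 0 0 (2 * n) (by omega)
    simpa using this
  have hdelta : max (t 0) (1/2) - t 0 ≤ t (2 * n) / 2 := by
    rcases le_total (t 0) (1/2) with h | h
    · rw [max_eq_right h]; linarith
    · rw [max_eq_left h]
      have := hpos (2 * n) le_rfl
      linarith
  have htn0 : 0 ≤ t (2 * n) := hpos (2 * n) le_rfl
  have hsum : LPObj n t' = LPObj n t + 3 * ((max (t 0) (1/2) - t 0) - t (2 * n)) := by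
    have hdiff : ∑ i ∈ Finset.range (2 * n + 1), ((coeff3 n i : ℝ) * t' i - (coeff3 n i : ℝ) * t i)
        = ((max (t 0) (1/2) - t 0) - t (2 * n)) := by
      have hsub : ({0, 2 * n} : Finset ℕ) ⊆ Finset.range (2 * n + 1) := by
        intro x hx
        simp only [Finset.mem_insert, Finset.mem_singleton] at hx
        rcases hx with h | h <;> simp [h]
      rw [← Finset.sum_subset hsub]
      · rw [Finset.sum_pair hne]
        rw [ht'0, ht'top, coeff3_zero, coeff3_top]
        push_cast
        ring
      · intro x _ hx
        simp only [Finset.mem_insert, Finset.mem_singleton, not_or] at hx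
        have : t' x = t x := by simp [ht'def, hx.1, hx.2]
        rw [this]; ring
    have := Finset.sum_sub_distrib (f := fun i => (coeff3 n i : ℝ) * t' i)
      (g := fun i => (coeff3 n i : ℝ) * t i) (s := Finset.range (2 * n + 1))
    rw [this] at hdiff
    unfold LPObj
    linarith
  refine ⟨t', hfeas, ht'top, ?_, ?_⟩
  · rw [hsum]; linarith
  · intro hpos'
    rw [hsum]; linarith
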